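/- Let A be the symmetric 3×3 matrix with rows (6,2,1), (2,5,3), (1,3,4), and define ξ : ℝ³ → ℝ by ξ(x) = (x·Ax)/2. Then ξ is convex on ℝ³, and there exists a probability measure μ on ℝ_+³, uniform on three points, such that ∫ ξ* dμ↑ > ∫ ξ* dμ. -/

import Mathlib

open MeasureTheory
open scoped ENNReal

/-- The nonnegative orthant `ℝ_+^D` in `ℝ^D`. -/
def orthant (D : ℕ) : Set (EuclideanSpace ℝ (Fin D)) := {x | ∀ i, 0 ≤ x i}

/-- The monotone conjugate `ξ*(y) = sup_{x ∈ ℝ_+^D} (x·y − ξ(x))`, valued in `[0, +∞]`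
(this agrees with the usual monotone conjugate at every point where the latter is
nonnegative, in particular everywhere on `ℝ_+^D` when `ξ(0) = 0`). -/
noncomputable def monotoneConjNN (D : ℕ) (ξ : EuclideanSpace ℝ (Fin D) → ℝ)
    (y : EuclideanSpace ℝ (Fin D)) : ℝ≥0∞ :=
  ⨆ x : orthant D, ENNReal.ofReal ((inner ℝ x.1 y : ℝ) - ξ x.1)

/-- The generalized inverse `F_d^{-1}(u) = inf {t ≥ 0 : F_d(t) ≥ u}` of the cumulative
distribution function of the `d`-th marginal of `μ`. -/
noncomputable def cdfInv (D : ℕ) (μ : Measure (EuclideanSpace ℝ (Fin D))) (d : Fin D)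
    (u : ℝ) : ℝ :=
  sInf {t : ℝ | 0 ≤ t ∧ u ≤ (μ {x : EuclideanSpace ℝ (Fin D) | x d ≤ t}).toReal}

/-- The monotone rearrangement `μ↑` of a measure `μ` on `ℝ_+^D`: the law of
`(F₁^{-1}(U), …, F_D^{-1}(U))` with `U` uniform on `(0,1)`. -/
noncomputable def monotoneRearrangement (D : ℕ) (μ : Measure (EuclideanSpace ℝ (Fin D))) :
    Measure (EuclideanSpace ℝ (Fin D)) :=
  Measure.map (fun u : ℝ => (WithLp.toLp 2 (fun d => cdfInv D μ d u) : EuclideanSpace ℝ (Fin D)))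
    (volume.restrict (Set.Ioo (0 : ℝ) 1))

/-- The symmetric matrix `A` with rows `(6,2,1)`, `(2,5,3)`, `(1,3,4)`. -/
def Amat : Matrix (Fin 3) (Fin 3) ℝ := !![6, 2, 1; 2, 5, 3; 1, 3, 4]

/-- The quadratic form `ξ(x) = (x·Ax)/2` on `ℝ³`. -/
noncomputable def quadForm (x : EuclideanSpace ℝ (Fin 3)) : ℝ :=
  (∑ i, ∑ j, Amat i j * x i * x j) / 2

/-! ### Auxiliary material -/

abbrev E3 := EuclideanSpace ℝ (Fin 3)

lemma quadForm_eq (x : E3) :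
    quadForm x = (6*x 0*x 0 + 5*x 1*x 1 + 4*x 2*x 2 + 4*x 0*x 1 + 2*x 0*x 2 + 6*x 1*x 2)/2 := by
  simp [quadForm, Fin.sum_univ_three, Amat, Matrix.cons_val_zero, Matrix.cons_val_one]; ring

lemma Qpos (v0 v1 v2 : ℝ) : 0 ≤ 6*v0*v0 + 5*v1*v1 + 4*v2*v2 + 4*v0*v1 + 2*v0*v2 + 6*v1*v2 := by
  nlinarith [sq_nonneg (v0 + v1/3 + v2/6), sq_nonneg (v1 + 6/13*v2), sq_nonneg v2]

lemma convex_quad : ConvexOn ℝ Set.univ quadForm := by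
  constructor
  · exact convex_univ
  · intro x _ y _ a b ha hb hab
    have hx0 : (a • x + b • y) 0 = a * x 0 + b * y 0 := rfl
    have hx1 : (a • x + b • y) 1 = a * x 1 + b * y 1 := rfl
    have hx2 : (a • x + b • y) 2 = a * x 2 + b * y 2 := rfl
    rw [quadForm_eq, quadForm_eq, quadForm_eq, hx0, hx1, hx2, smul_eq_mul, smul_eq_mul,
      ← sub_nonneg]
    have key : a * ((6*x 0*x 0 + 5*x 1*x 1 + 4*x 2*x 2 + 4*x 0*x 1 + 2*x 0*x 2 + 6*x 1*x 2)/2)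
        + b * ((6*y 0*y 0 + 5*y 1*y 1 + 4*y 2*y 2 + 4*y 0*y 1 + 2*y 0*y 2 + 6*y 1*y 2)/2)
        - (6*(a * x 0 + b * y 0)*(a * x 0 + b * y 0) + 5*(a * x 1 + b * y 1)*(a * x 1 + b * y 1)
          + 4*(a * x 2 + b * y 2)*(a * x 2 + b * y 2) + 4*(a * x 0 + b * y 0)*(a * x 1 + b * y 1)
          + 2*(a * x 0 + b * y 0)*(a * x 2 + b * y 2) + 6*(a * x 1 + b * y 1)*(a * x 2 + b * y 2))/2
        = a * b * (6*(x 0 - y 0)*(x 0 - y 0) + 5*(x 1 - y 1)*(x 1 - y 1) + 4*(x 2 - y 2)*(x 2 - y 2)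
          + 4*(x 0 - y 0)*(x 1 - y 1) + 2*(x 0 - y 0)*(x 2 - y 2) + 6*(x 1 - y 1)*(x 2 - y 2))/2 := by
      have hb1 : b = 1 - a := by linarith
      rw [hb1]; ring
    rw [key]
    have := Qpos (x 0 - y 0) (x 1 - y 1) (x 2 - y 2)
    positivity

lemma inner_eq (x y : E3) :
    (inner ℝ x y : ℝ) = x 0 * y 0 + x 1 * y 1 + x 2 * y 2 := by
  simp [PiLp.inner_apply, Fin.sum_univ_three]; ring

lemma conj_le (y : E3) (c : ℝ)
    (h : ∀ x : E3, 0 ≤ x 0 → 0 ≤ x 1 → 0 ≤ x 2 →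
      x 0 * y 0 + x 1 * y 1 + x 2 * y 2 - quadForm x ≤ c) :
    monotoneConjNN 3 quadForm y ≤ ENNReal.ofReal c := by
  refine iSup_le fun x => ENNReal.ofReal_le_ofReal ?_
  rw [inner_eq]
  exact h x.1 (x.2 0) (x.2 1) (x.2 2)

lemma conj_ge (y : E3) (x : E3) (hx : ∀ i, 0 ≤ x i) :
    ENNReal.ofReal (x 0 * y 0 + x 1 * y 1 + x 2 * y 2 - quadForm x) ≤
      monotoneConjNN 3 quadForm y := by
  refine le_trans (le_of_eq ?_) (le_iSup _ (⟨x, hx⟩ : orthant 3))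
  rw [inner_eq]

lemma ub0 : monotoneConjNN 3 quadForm (!₂[0,0,0] : E3) ≤ ENNReal.ofReal 0 := by
  refine conj_le _ 0 fun x h0 h1 h2 => ?_
  rw [quadForm_eq]
  have h00 : ((!₂[0,0,0] : E3) 0) = 0 := rfl
  have h01 : ((!₂[0,0,0] : E3) 1) = 0 := rfl
  have h02 : ((!₂[0,0,0] : E3) 2) = 0 := rfl
  rw [h00, h01, h02]
  nlinarith [sq_nonneg (x 0 + x 1/3 + x 2/6), sq_nonneg (x 1 + 6/13*x 2), sq_nonneg (x 2)]

lemma ub1 : monotoneConjNN 3 quadForm (!₂[4,4,0] : E3) ≤ ENNReal.ofReal (28/13) := by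
  refine conj_le _ _ fun x h0 h1 h2 => ?_
  rw [quadForm_eq]
  show x 0 * 4 + x 1 * 4 + x 2 * 0 - _ ≤ _
  nlinarith [sq_nonneg ((x 0 - 6/13) + (x 1 - 8/13)/3 + x 2/6), sq_nonneg ((x 1 - 8/13) + 6/13*x 2),
    sq_nonneg (x 2), mul_nonneg (by norm_num : (0:ℝ) ≤ 30/13) h2]

lemma ub2 : monotoneConjNN 3 quadForm (!₂[3,4,3] : E3) ≤ ENNReal.ofReal (215/114) := by
  refine conj_le _ _ fun x h0 h1 h2 => ?_
  rw [quadForm_eq]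
  show x 0 * 3 + x 1 * 4 + x 2 * 3 - _ ≤ _
  nlinarith [sq_nonneg ((x 0 - 16/57) + (x 1 - 29/57)/3 + (x 2 - 17/57)/6),
    sq_nonneg ((x 1 - 29/57) + 6/13*(x 2 - 17/57)), sq_nonneg (x 2 - 17/57)]

lemma lb1 : ENNReal.ofReal (93/52) ≤ monotoneConjNN 3 quadForm (!₂[3,4,0] : E3) := by
  have h := conj_ge (!₂[3,4,0]) (!₂[7/26, 9/13, 0]) (by intro i; fin_cases i <;> norm_num)
  refine le_trans (le_of_eq ?_) h
  rw [quadForm_eq]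
  norm_num [Matrix.cons_val_two]

lemma lb2 : ENNReal.ofReal (43/19) ≤ monotoneConjNN 3 quadForm (!₂[4,4,3] : E3) := by
  have h := conj_ge (!₂[4,4,3]) (!₂[9/19, 8/19, 6/19]) (by intro i; fin_cases i <;> norm_num)
  refine le_trans (le_of_eq ?_) h
  rw [quadForm_eq]
  norm_num [Matrix.cons_val_two]

/-! ### The measure and its rearrangement -/

noncomputable def myμ : Measure E3 :=
  (3 : ℝ≥0∞)⁻¹ • (Measure.dirac !₂[0,0,0] + Measure.dirac !₂[4,4,0] + Measure.dirac !₂[3,4,3])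

lemma F_eval_gen (a b c : E3) (d : Fin 3) (t : ℝ) :
    (((3 : ℝ≥0∞)⁻¹ • (Measure.dirac a + Measure.dirac b + Measure.dirac c))
        {x : E3 | x d ≤ t}).toReal =
      ((if a d ≤ t then (1:ℝ) else 0) + (if b d ≤ t then 1 else 0)
        + (if c d ≤ t then 1 else 0))/3 := by
  have h : ((3 : ℝ≥0∞)⁻¹ • (Measure.dirac a + Measure.dirac b + Measure.dirac c))
      {x : E3 | x d ≤ t} = 3⁻¹ * ((if a d ≤ t then (1:ℝ≥0∞) else 0)
      + (if b d ≤ t then 1 else 0) + (if c d ≤ t then 1 else 0)) := by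
    simp only [Measure.smul_apply, Measure.add_apply, Measure.dirac_apply,
      Set.indicator_apply, Set.mem_setOf_eq, Pi.one_apply, smul_eq_mul]
  rw [h]
  split_ifs <;> norm_num <;> simp [ENNReal.toReal_inv] <;> norm_num

lemma F_eval (d : Fin 3) (t : ℝ) :
    (myμ {x : E3 | x d ≤ t}).toReal =
      ((if (!₂[0,0,0] : E3) d ≤ t then (1:ℝ) else 0) + (if (!₂[4,4,0] : E3) d ≤ t then 1 else 0)
        + (if (!₂[3,4,3] : E3) d ≤ t then 1 else 0))/3 := by
  rw [myμ, F_eval_gen]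

lemma cdfInv_eq (d : Fin 3) (u c : ℝ) (hc : 0 ≤ c) (hmem : u ≤ (myμ {x : E3 | x d ≤ c}).toReal)
    (hlb : ∀ t, 0 ≤ t → u ≤ (myμ {x : E3 | x d ≤ t}).toReal → c ≤ t) :
    cdfInv 3 myμ d u = c :=
  IsLeast.csInf_eq ⟨⟨hc, hmem⟩, fun t ht => hlb t ht.1 ht.2⟩

lemma cdf_lo (u : ℝ) (h0 : 0 < u) (h1 : u ≤ 1/3) (d : Fin 3) : cdfInv 3 myμ d u = 0 := by
  refine cdfInv_eq d u 0 le_rfl ?_ fun t ht _ => ht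
  rw [F_eval]
  fin_cases d <;> norm_num <;> linarith

lemma cdf_mid0 (u : ℝ) (h0 : 1/3 < u) (h1 : u ≤ 2/3) : cdfInv 3 myμ 0 u = 3 := by
  refine cdfInv_eq 0 u 3 (by norm_num) ?_ fun t ht hle => ?_
  · rw [F_eval]; norm_num; linarith
  · rw [F_eval] at hle
    by_contra hlt
    push_neg at hlt
    revert hle
    norm_num
    have h4 : ¬ (4:ℝ) ≤ t := by linarith
    have h3 : ¬ (3:ℝ) ≤ t := by linarith
    simp [h4, h3, ht]; linarith

lemma cdf_mid1 (u : ℝ) (h0 : 1/3 < u) (h1 : u ≤ 2/3) : cdfInv 3 myμ 1 u = 4 := by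
  refine cdfInv_eq 1 u 4 (by norm_num) ?_ fun t ht hle => ?_
  · rw [F_eval]; norm_num; linarith
  · rw [F_eval] at hle
    by_contra hlt
    push_neg at hlt
    revert hle
    norm_num
    have h4 : ¬ (4:ℝ) ≤ t := by linarith
    simp [h4, ht]; linarith

lemma cdf_mid2 (u : ℝ) (h0 : 1/3 < u) (h1 : u ≤ 2/3) : cdfInv 3 myμ 2 u = 0 := by
  refine cdfInv_eq 2 u 0 le_rfl ?_ fun t ht _ => ht
  rw [F_eval]; norm_num [Matrix.cons_val_two]; linarith

lemma cdf_hi0 (u : ℝ) (h0 : 2/3 < u) (h1 : u < 1) : cdfInv 3 myμ 0 u = 4 := by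
  refine cdfInv_eq 0 u 4 (by norm_num) ?_ fun t ht hle => ?_
  · rw [F_eval]; norm_num; linarith
  · rw [F_eval] at hle
    by_contra hlt
    push_neg at hlt
    revert hle
    norm_num
    have h4 : ¬ (4:ℝ) ≤ t := by linarith
    by_cases h3 : (3:ℝ) ≤ t <;> simp [h4, h3, ht] <;> linarith

lemma cdf_hi1 (u : ℝ) (h0 : 2/3 < u) (h1 : u < 1) : cdfInv 3 myμ 1 u = 4 := by
  refine cdfInv_eq 1 u 4 (by norm_num) ?_ fun t ht hle => ?_
  · rw [F_eval]; norm_num; linarith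
  · rw [F_eval] at hle
    by_contra hlt
    push_neg at hlt
    revert hle
    norm_num
    have h4 : ¬ (4:ℝ) ≤ t := by linarith
    simp [h4, ht]; linarith

lemma cdf_hi2 (u : ℝ) (h0 : 2/3 < u) (h1 : u < 1) : cdfInv 3 myμ 2 u = 3 := by
  refine cdfInv_eq 2 u 3 (by norm_num) ?_ fun t ht hle => ?_
  · rw [F_eval]; norm_num [Matrix.cons_val_two]; linarith
  · rw [F_eval] at hle
    by_contra hlt
    push_neg at hlt
    revert hle
    norm_num [Matrix.cons_val_two]
    split_ifs <;> norm_num <;> linarith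

noncomputable def hstep : ℝ → E3 := fun u =>
  if u ≤ 1/3 then !₂[0,0,0] else if u ≤ 2/3 then !₂[3,4,0] else !₂[4,4,3]

lemma hstep_meas : Measurable hstep := by
  unfold hstep
  exact (measurable_const.ite (measurableSet_le measurable_id measurable_const)
    (measurable_const.ite (measurableSet_le measurable_id measurable_const) measurable_const))

lemma g_eq_h {u : ℝ} (hu : u ∈ Set.Ioo (0:ℝ) 1) :
    (WithLp.toLp 2 (fun d => cdfInv 3 myμ d u) : E3) = hstep u := by
  obtain ⟨h0, h1⟩ := hu
  unfold hstep
  by_cases hA : u ≤ 1/3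
  · rw [if_pos hA]
    congr 1; funext d
    rw [cdf_lo u h0 hA d]
    fin_cases d <;> rfl
  · rw [if_neg hA]
    push_neg at hA
    by_cases hB : u ≤ 2/3
    · rw [if_pos hB]
      congr 1; funext d
      fin_cases d
      · exact cdf_mid0 u hA hB
      · exact cdf_mid1 u hA hB
      · exact cdf_mid2 u hA hB
    · rw [if_neg hB]
      push_neg at hB
      congr 1; funext d
      fin_cases d
      · exact cdf_hi0 u hB h1
      · exact cdf_hi1 u hB h1
      · exact cdf_hi2 u hB h1

lemma rearr_eq : monotoneRearrangement 3 myμ =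
    (3 : ℝ≥0∞)⁻¹ • (Measure.dirac !₂[0,0,0] + Measure.dirac !₂[3,4,0] + Measure.dirac !₂[4,4,3]) := by
  rw [monotoneRearrangement]
  have hae : (fun u : ℝ => (WithLp.toLp 2 (fun d => cdfInv 3 myμ d u) : E3))
      =ᵐ[volume.restrict (Set.Ioo (0:ℝ) 1)] hstep := by
    filter_upwards [ae_restrict_mem measurableSet_Ioo] with u hu using g_eq_h hu
  rw [Measure.map_congr hae]
  have hsplit : volume.restrict (Set.Ioo (0:ℝ) 1) =
      volume.restrict (Set.Ioc 0 (1/3)) + volume.restrict (Set.Ioc (1/3) (2/3))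
        + volume.restrict (Set.Ioo (2/3) 1) := by
    rw [← Measure.restrict_union (by simp [Set.disjoint_left]; intros; linarith) measurableSet_Ioc,
      ← Measure.restrict_union (by
        simp only [Set.disjoint_left, Set.mem_union, Set.mem_Ioc, Set.mem_Ioo]
        rintro a (⟨_, h⟩ | ⟨_, h⟩) ⟨h2, _⟩ <;> linarith) measurableSet_Ioo]
    congr 1
    rw [Set.Ioc_union_Ioc_eq_Ioc (by norm_num) (by norm_num),
      Set.Ioc_union_Ioo_eq_Ioo (by norm_num) (by norm_num)]
  rw [hsplit, Measure.map_add _ _ hstep_meas, Measure.map_add _ _ hstep_meas]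
  have e1 : Measure.map hstep (volume.restrict (Set.Ioc (0:ℝ) (1/3)))
      = (3 : ℝ≥0∞)⁻¹ • Measure.dirac (!₂[0,0,0] : E3) := by
    have : hstep =ᵐ[volume.restrict (Set.Ioc (0:ℝ) (1/3))] fun _ => (!₂[0,0,0] : E3) := by
      filter_upwards [ae_restrict_mem measurableSet_Ioc] with u hu
      simp only [hstep, if_pos hu.2]
    rw [Measure.map_congr this, Measure.map_const, Measure.restrict_apply_univ,
      Real.volume_Ioc, show (1:ℝ)/3 - 0 = (3:ℝ)⁻¹ by norm_num,
      ENNReal.ofReal_inv_of_pos (by norm_num : (0:ℝ) < 3)]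
    norm_num
  have e2 : Measure.map hstep (volume.restrict (Set.Ioc (1/3:ℝ) (2/3)))
      = (3 : ℝ≥0∞)⁻¹ • Measure.dirac (!₂[3,4,0] : E3) := by
    have : hstep =ᵐ[volume.restrict (Set.Ioc (1/3:ℝ) (2/3))] fun _ => (!₂[3,4,0] : E3) := by
      filter_upwards [ae_restrict_mem measurableSet_Ioc] with u hu
      simp only [hstep, if_neg (by linarith [hu.1] : ¬ u ≤ 1/3), if_pos hu.2]
    rw [Measure.map_congr this, Measure.map_const, Measure.restrict_apply_univ,
      Real.volume_Ioc, show (2:ℝ)/3 - 1/3 = (3:ℝ)⁻¹ by norm_num,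
      ENNReal.ofReal_inv_of_pos (by norm_num : (0:ℝ) < 3)]
    norm_num
  have e3 : Measure.map hstep (volume.restrict (Set.Ioo (2/3:ℝ) 1))
      = (3 : ℝ≥0∞)⁻¹ • Measure.dirac (!₂[4,4,3] : E3) := by
    have : hstep =ᵐ[volume.restrict (Set.Ioo (2/3:ℝ) 1)] fun _ => (!₂[4,4,3] : E3) := by
      filter_upwards [ae_restrict_mem measurableSet_Ioo] with u hu
      simp only [hstep, if_neg (by linarith [hu.1] : ¬ u ≤ 1/3),
        if_neg (by linarith [hu.1] : ¬ u ≤ 2/3)]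
    rw [Measure.map_congr this, Measure.map_const, Measure.restrict_apply_univ,
      Real.volume_Ioo, show (1:ℝ) - 2/3 = (3:ℝ)⁻¹ by norm_num,
      ENNReal.ofReal_inv_of_pos (by norm_num : (0:ℝ) < 3)]
    norm_num
  rw [e1, e2, e3, smul_add, smul_add]

lemma lintegral_three (f : E3 → ℝ≥0∞) (a b c : E3) :
    ∫⁻ y, f y ∂((3 : ℝ≥0∞)⁻¹ • (Measure.dirac a + Measure.dirac b + Measure.dirac c))
      = 3⁻¹ * (f a + f b + f c) := by
  rw [lintegral_smul_measure, lintegral_add_measure, lintegral_add_measure,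
    lintegral_dirac, lintegral_dirac, lintegral_dirac, smul_eq_mul]

/-- the quadratic form `ξ(x) = (x·Ax)/2` is convex on `ℝ³`, and there is a
probability measure `μ` on `ℝ_+³`, uniform on three points, with `∫ ξ* dμ↑ > ∫ ξ* dμ`. -/
theorem rearrangement_counterexample :
    ConvexOn ℝ Set.univ quadForm ∧
    ∃ y₀ y₁ y₂ : EuclideanSpace ℝ (Fin 3),
      (∀ i, 0 ≤ y₀ i) ∧ (∀ i, 0 ≤ y₁ i) ∧ (∀ i, 0 ≤ y₂ i) ∧
      (∫⁻ y, monotoneConjNN 3 quadForm y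
          ∂((3 : ℝ≥0∞)⁻¹ • (Measure.dirac y₀ + Measure.dirac y₁ + Measure.dirac y₂)) <
        ∫⁻ y, monotoneConjNN 3 quadForm y
          ∂(monotoneRearrangement 3
            ((3 : ℝ≥0∞)⁻¹ • (Measure.dirac y₀ + Measure.dirac y₁ + Measure.dirac y₂)))) := by
  refine ⟨convex_quad, !₂[0,0,0], !₂[4,4,0], !₂[3,4,3], ?_, ?_, ?_, ?_⟩
  · intro i; fin_cases i <;> norm_num
  · intro i; fin_cases i <;> norm_num
  · intro i; fin_cases i <;> norm_num
  rw [show ((3 : ℝ≥0∞)⁻¹ • (Measure.dirac (!₂[0,0,0] : E3) + Measure.dirac !₂[4,4,0]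
      + Measure.dirac !₂[3,4,3])) = myμ from rfl, show monotoneRearrangement 3 myμ
      = _ from rearr_eq, show myμ = (3 : ℝ≥0∞)⁻¹ • (Measure.dirac (!₂[0,0,0] : E3)
      + Measure.dirac !₂[4,4,0] + Measure.dirac !₂[3,4,3]) from rfl,
    lintegral_three, lintegral_three]
  set f := monotoneConjNN 3 quadForm
  have hub : f !₂[0,0,0] + f !₂[4,4,0] + f !₂[3,4,3] ≤ ENNReal.ofReal (5987/1482) := by
    calc f !₂[0,0,0] + f !₂[4,4,0] + f !₂[3,4,3]
        ≤ ENNReal.ofReal 0 + ENNReal.ofReal (28/13) + ENNReal.ofReal (215/114) :=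
          add_le_add (add_le_add ub0 ub1) ub2
      _ = ENNReal.ofReal (5987/1482) := by
          rw [← ENNReal.ofReal_add (by norm_num) (by norm_num),
            ← ENNReal.ofReal_add (by norm_num) (by norm_num)]
          norm_num
  have hlb : ENNReal.ofReal (4003/988) ≤ f !₂[0,0,0] + f !₂[3,4,0] + f !₂[4,4,3] := by
    calc ENNReal.ofReal (4003/988)
        = 0 + ENNReal.ofReal (93/52) + ENNReal.ofReal (43/19) := by
          rw [zero_add, ← ENNReal.ofReal_add (by norm_num) (by norm_num)]
          norm_num
      _ ≤ f !₂[0,0,0] + f !₂[3,4,0] + f !₂[4,4,3] :=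
          add_le_add (add_le_add zero_le lb1) lb2
  calc 3⁻¹ * (f !₂[0,0,0] + f !₂[4,4,0] + f !₂[3,4,3])
      ≤ 3⁻¹ * ENNReal.ofReal (5987/1482) := mul_le_mul_right hub _
    _ < 3⁻¹ * ENNReal.ofReal (4003/988) := by
        refine ENNReal.mul_lt_mul_right (a := 3⁻¹) (by norm_num) (by norm_num) ?_
        rw [ENNReal.ofReal_lt_ofReal_iff (by norm_num)]
        norm_num
    _ ≤ 3⁻¹ * (f !₂[0,0,0] + f !₂[3,4,0] + f !₂[4,4,3]) := mul_le_mul_right hlb _
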